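/- Let n ≥ 1 be an integer. In V = ℝ^{2n}, with standard basis vectors denoted ε_1,…,ε_n,δ_1,…,δ_n, let W = S_n × S_n act by permuting the ε-coordinates and the δ-coordinates separately, let ρ_0 := Σ_{i=1}^n ((n+1−2i)/2)ε_i + Σ_{j=1}^n ((n+1−2j)/2)δ_j, let Π := {ε_1−δ_1, δ_1−ε_2, ε_2−δ_2, …, δ_{n−1}−ε_n, ε_n−δ_n}, let Q^+ be the set of linear combinations of elements of Π with nonnegative integer coefficients, and let ξ := Σ_{i=1}^n ε_i − Σ_{j=1}^n δ_j. If λ ∈ V has trivial stabilizer in W and the whole orbit Wλ is contained in ρ_0 − Q^+, then there exist s ∈ ℤ_{≥0} and w ∈ W with λ = w(ρ_0 − sξ). -/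

import Mathlib

/-- The action of `(σ,τ) ∈ S_n × S_n` on `ℝ^{2n}` permuting the `ε`- and the
`δ`-coordinates separately (so that `ε_i ↦ ε_{σ(i)}`, `δ_j ↦ δ_{τ(j)}`). -/
def glAct (n : ℕ) (σ τ : Equiv.Perm (Fin n))
    (f : Fin n ⊕ Fin n → ℝ) : Fin n ⊕ Fin n → ℝ :=
  fun z => f (Sum.map (⇑σ.symm) (⇑τ.symm) z)

/-- `ρ₀ = Σ_i ((n+1−2i)/2)ε_i + Σ_j ((n+1−2j)/2)δ_j` for `gl(n|n)`
(`1`-indexed; here coordinates are `0`-indexed). -/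
noncomputable def glRho (n : ℕ) : Fin n ⊕ Fin n → ℝ :=
  Sum.elim (fun i => ((n : ℝ) - 1 - 2 * (i : ℕ)) / 2)
    (fun j => ((n : ℝ) - 1 - 2 * (j : ℕ)) / 2)

/-- `ξ = Σ ε_i − Σ δ_j`. -/
noncomputable def glXi (n : ℕ) : Fin n ⊕ Fin n → ℝ :=
  Sum.elim (fun _ => 1) (fun _ => -1)

/-- The simple roots `Π = {ε_1−δ_1, δ_1−ε_2, ε_2−δ_2, …, δ_{n−1}−ε_n,
ε_n−δ_n}` of `gl(n|n)` (written `0`-indexed). -/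
noncomputable def glSimple (n : ℕ) : Set (Fin n ⊕ Fin n → ℝ) :=
  {v | (∃ i : Fin n,
          v = Pi.single (Sum.inl i) 1 - Pi.single (Sum.inr i) 1) ∨
       (∃ i : Fin n, ∃ hi : (i : ℕ) + 1 < n,
          v = Pi.single (Sum.inr i) 1 - Pi.single (Sum.inl ⟨(i : ℕ) + 1, hi⟩) 1)}

section aux

lemma strictMono_le' {n : ℕ} (g : Fin n → ℕ) (hg : StrictMono g) :
    ∀ j (hj : j < n), j ≤ g ⟨j, hj⟩ := by
  intro j
  induction j with
  | zero => exact fun _ => Nat.zero_le _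
  | succ i ih =>
    intro hj
    have h1 : (⟨i, by omega⟩ : Fin n) < ⟨i+1, hj⟩ := by simp [Fin.lt_def]
    have h2 := hg h1
    have h3 := ih (by omega)
    omega

lemma nat_lemma {n : ℕ} (m : Fin n → ℕ) (hm : Function.Injective m) :
    n * (n-1) ≤ 2 * ∑ i, m i ∧
    (2 * ∑ i, m i = n * (n-1) → ∀ i, m i = (((Tuple.sort m)⁻¹ i : Fin n) : ℕ)) := by
  set σ := Tuple.sort m with hσ
  have hg : StrictMono (fun k => m (σ k)) :=
    (Tuple.monotone_sort m).strictMono_of_injective (hm.comp (Equiv.injective _))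
  have hle : ∀ k : Fin n, (k:ℕ) ≤ m (σ k) := fun k => strictMono_le' _ hg k.1 k.2
  have hsum : ∑ i, m i = ∑ k, m (σ k) := (Equiv.sum_comp σ m).symm
  have hbase : (∑ k : Fin n, (k:ℕ)) * 2 = n * (n-1) := by
    rw [Fin.sum_univ_eq_sum_range (fun i => i)]
    exact Finset.sum_range_id_mul_two n
  have hge : ∑ k : Fin n, (k:ℕ) ≤ ∑ k, m (σ k) :=
    Finset.sum_le_sum (fun k _ => hle k)
  constructor
  · omega
  · intro heq i
    have h2 : ∑ k : Fin n, (k:ℕ) = ∑ k : Fin n, m (σ k) := by omega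
    have h3 : ∀ k ∈ (Finset.univ : Finset (Fin n)), (k : ℕ) = m (σ k) :=
      (Finset.sum_eq_sum_iff_of_le (fun k _ => hle k)).mp h2
    have h4 := h3 (σ⁻¹ i) (Finset.mem_univ _)
    simpa using h4.symm

lemma q_inl0 {n : ℕ} (h0 : 0 < n) {q : Fin n ⊕ Fin n → ℝ}
    (hq : q ∈ AddSubmonoid.closure (glSimple n)) :
    ∃ k : ℕ, q (Sum.inl ⟨0, h0⟩) = k := by
  induction hq using AddSubmonoid.closure_induction with
  | mem v hv =>
    rcases hv with ⟨i, rfl⟩ | ⟨i, hi, rfl⟩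
    · by_cases h : (⟨0, h0⟩ : Fin n) = i
      · exact ⟨1, by simp [Pi.single_apply, h]⟩
      · exact ⟨0, by simp [Pi.single_apply, h]⟩
    · refine ⟨0, ?_⟩
      simp [Pi.single_apply, Fin.ext_iff]
  | zero => exact ⟨0, by simp⟩
  | add x y hx hy ihx ihy =>
    obtain ⟨k1, h1⟩ := ihx; obtain ⟨k2, h2⟩ := ihy
    exact ⟨k1 + k2, by simp [h1, h2]⟩

lemma q_inr0 {n : ℕ} (h0 : 0 < n) {q : Fin n ⊕ Fin n → ℝ}
    (hq : q ∈ AddSubmonoid.closure (glSimple n)) :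
    ∃ k : ℤ, q (Sum.inr ⟨0, h0⟩) = k := by
  induction hq using AddSubmonoid.closure_induction with
  | mem v hv =>
    rcases hv with ⟨i, rfl⟩ | ⟨i, hi, rfl⟩
    · by_cases h : (⟨0, h0⟩ : Fin n) = i
      · exact ⟨-1, by simp [Pi.single_apply, h]⟩
      · exact ⟨0, by simp [Pi.single_apply, h]⟩
    · by_cases h : (⟨0, h0⟩ : Fin n) = i
      · exact ⟨1, by simp [Pi.single_apply, h]⟩
      · exact ⟨0, by simp [Pi.single_apply, h]⟩
  | zero => exact ⟨0, by simp⟩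
  | add x y hx hy ihx ihy =>
    obtain ⟨k1, h1⟩ := ihx; obtain ⟨k2, h2⟩ := ihy
    exact ⟨k1 + k2, by simp [h1, h2]⟩

lemma q_both0 {n : ℕ} (h0 : 0 < n) {q : Fin n ⊕ Fin n → ℝ}
    (hq : q ∈ AddSubmonoid.closure (glSimple n)) :
    ∃ k : ℕ, q (Sum.inl ⟨0, h0⟩) + q (Sum.inr ⟨0, h0⟩) = k := by
  induction hq using AddSubmonoid.closure_induction with
  | mem v hv =>
    rcases hv with ⟨i, rfl⟩ | ⟨i, hi, rfl⟩
    · by_cases h : (⟨0, h0⟩ : Fin n) = i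
      · exact ⟨0, by simp [Pi.single_apply, h]⟩
      · exact ⟨0, by simp [Pi.single_apply, h]⟩
    · by_cases h : (⟨0, h0⟩ : Fin n) = i
      · refine ⟨1, ?_⟩
        simp [Pi.single_apply, h, Fin.ext_iff]
      · refine ⟨0, ?_⟩
        simp [Pi.single_apply, h, Fin.ext_iff]
  | zero => exact ⟨0, by simp⟩
  | add x y hx hy ihx ihy =>
    obtain ⟨k1, h1⟩ := ihx; obtain ⟨k2, h2⟩ := ihy
    refine ⟨k1 + k2, by push_cast; simp only [Pi.add_apply]; linarith⟩

lemma q_total {n : ℕ} {q : Fin n ⊕ Fin n → ℝ}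
    (hq : q ∈ AddSubmonoid.closure (glSimple n)) :
    ∑ z : Fin n ⊕ Fin n, q z = 0 := by
  induction hq using AddSubmonoid.closure_induction with
  | mem v hv =>
    rcases hv with ⟨i, rfl⟩ | ⟨i, hi, rfl⟩ <;>
      simp [Finset.sum_sub_distrib]
  | zero => simp
  | add x y hx hy ihx ihy =>
    simp only [Pi.add_apply, Finset.sum_add_distrib, ihx, ihy, add_zero]

end aux

/-- For `gl(n|n)`, the regular `W`-orbits lying entirely in `ρ₀ − Q⁺` are
exactly the orbits `W(ρ₀ − sξ)` with `s ∈ ℤ_{≥0}`. -/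
theorem glnn_regular_orbit (n : ℕ) (hn : 1 ≤ n)
    (lam : Fin n ⊕ Fin n → ℝ)
    (hstab : ∀ σ τ : Equiv.Perm (Fin n),
      glAct n σ τ lam = lam → σ = 1 ∧ τ = 1)
    (horb : ∀ σ τ : Equiv.Perm (Fin n),
      glRho n - glAct n σ τ lam ∈ AddSubmonoid.closure (glSimple n)) :
    ∃ (s : ℕ) (σ τ : Equiv.Perm (Fin n)),
      lam = glAct n σ τ (glRho n - (s : ℝ) • glXi n) := by
  have h0 : 0 < n := hn
  set z0 : Fin n := ⟨0, h0⟩ with hz0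
  set c : ℝ := ((n : ℝ) - 1) / 2 with hc
  set a : Fin n → ℝ := fun i => lam (Sum.inl i) with ha
  set b : Fin n → ℝ := fun j => lam (Sum.inr j) with hb
  -- injectivity of a and b
  have hainj : Function.Injective a := by
    intro i j hij
    by_contra hne
    have hfix : glAct n (Equiv.swap i j) 1 lam = lam := by
      funext z
      cases z with
      | inl k =>
        show lam (Sum.inl ((Equiv.swap i j).symm k)) = lam (Sum.inl k)
        rw [Equiv.symm_swap]
        rcases eq_or_ne k i with rfl | hki
        · rw [Equiv.swap_apply_left]; exact hij.symm
        rcases eq_or_ne k j with rfl | hkj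
        · rw [Equiv.swap_apply_right]; exact hij
        · rw [Equiv.swap_apply_of_ne_of_ne hki hkj]
      | inr k => rfl
    have := (hstab _ _ hfix).1
    exact hne (by simpa using this)
  have hbinj : Function.Injective b := by
    intro i j hij
    by_contra hne
    have hfix : glAct n 1 (Equiv.swap i j) lam = lam := by
      funext z
      cases z with
      | inr k =>
        show lam (Sum.inr ((Equiv.swap i j).symm k)) = lam (Sum.inr k)
        rw [Equiv.symm_swap]
        rcases eq_or_ne k i with rfl | hki
        · rw [Equiv.swap_apply_left]; exact hij.symm
        rcases eq_or_ne k j with rfl | hkj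
        · rw [Equiv.swap_apply_right]; exact hij
        · rw [Equiv.swap_apply_of_ne_of_ne hki hkj]
      | inl k => rfl
    have := (hstab _ _ hfix).2
    exact hne (by simpa using this)
  -- basic evaluations
  have heval_inl : ∀ (σ τ : Equiv.Perm (Fin n)),
      (glRho n - glAct n σ τ lam) (Sum.inl z0) = c - a (σ.symm z0) := by
    intro σ τ
    show glRho n (Sum.inl z0) - lam (Sum.inl (σ.symm z0)) = c - a (σ.symm z0)
    simp [glRho, hc, hz0]; rfl
  have heval_inr : ∀ (σ τ : Equiv.Perm (Fin n)),
      (glRho n - glAct n σ τ lam) (Sum.inr z0) = c - b (τ.symm z0) := by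
    intro σ τ
    show glRho n (Sum.inr z0) - lam (Sum.inr (τ.symm z0)) = c - b (τ.symm z0)
    simp [glRho, hc, hz0]; rfl
  -- the four arithmetic facts
  have hA : ∀ i, ∃ k : ℕ, c - a i = k := by
    intro i
    obtain ⟨k, hk⟩ := q_inl0 h0 (horb (Equiv.swap z0 i) 1)
    refine ⟨k, ?_⟩
    rw [heval_inl] at hk
    rwa [Equiv.symm_swap, Equiv.swap_apply_left] at hk
  have hB : ∀ j, ∃ k : ℤ, c - b j = k := by
    intro j
    obtain ⟨k, hk⟩ := q_inr0 h0 (horb 1 (Equiv.swap z0 j))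
    refine ⟨k, ?_⟩
    rw [heval_inr] at hk
    rwa [Equiv.symm_swap, Equiv.swap_apply_left] at hk
  have hAB : ∀ i j, ∃ k : ℕ, (c - a i) + (c - b j) = k := by
    intro i j
    obtain ⟨k, hk⟩ := q_both0 h0 (horb (Equiv.swap z0 i) (Equiv.swap z0 j))
    refine ⟨k, ?_⟩
    rw [heval_inl, heval_inr] at hk
    rwa [Equiv.symm_swap, Equiv.symm_swap, Equiv.swap_apply_left,
      Equiv.swap_apply_left] at hk
  -- sum of coordinates is zero
  have hcastn : ((n - 1 : ℕ) : ℝ) = (n : ℝ) - 1 := by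
    push_cast [Nat.cast_sub hn]; ring
  have hsum_fin : (∑ i : Fin n, ((i : ℕ) : ℝ)) * 2 = (n : ℝ) * ((n : ℝ) - 1) := by
    have h1 : (∑ k : Fin n, (k:ℕ)) * 2 = n * (n-1) := by
      rw [Fin.sum_univ_eq_sum_range (fun i => i)]
      exact Finset.sum_range_id_mul_two n
    have := congrArg (fun t : ℕ => (t : ℝ)) h1
    push_cast at this
    rwa [hcastn] at this
  have hrho_sum : ∑ i : Fin n, (((n : ℝ) - 1 - 2 * (i : ℕ)) / 2) = 0 := by
    have h2 : ∑ i : Fin n, (((n : ℝ) - 1 - 2 * (i : ℕ)) / 2)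
        = (∑ i : Fin n, (((n : ℝ) - 1) / 2)) - ∑ i : Fin n, ((i : ℕ) : ℝ) := by
      rw [← Finset.sum_sub_distrib]
      exact Finset.sum_congr rfl (fun i _ => by ring)
    rw [h2, Finset.sum_const, Finset.card_univ, Fintype.card_fin, nsmul_eq_mul]
    nlinarith [hsum_fin]
  have htot : (∑ i, a i) + (∑ j, b j) = 0 := by
    have hq := q_total (horb 1 1)
    have hact : glAct n 1 1 lam = lam := by
      funext z; cases z <;> rfl
    rw [hact] at hq
    have h3 : ∑ z : Fin n ⊕ Fin n, (glRho n - lam) z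
        = (∑ i : Fin n, (glRho n - lam) (Sum.inl i))
          + ∑ j : Fin n, (glRho n - lam) (Sum.inr j) := Fintype.sum_sum_type _
    rw [h3] at hq
    simp only [Pi.sub_apply, Finset.sum_sub_distrib, glRho, Sum.elim_inl,
      Sum.elim_inr] at hq
    rw [hrho_sum] at hq
    have : (∑ i : Fin n, lam (Sum.inl i)) + ∑ j : Fin n, lam (Sum.inr j) = 0 := by
      linarith
    simpa [ha, hb] using this
  -- maxima
  have hnonempty : (Finset.univ : Finset (Fin n)).Nonempty := ⟨z0, Finset.mem_univ _⟩
  obtain ⟨i₀, -, hmaxa⟩ := Finset.exists_max_image Finset.univ a hnonempty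
  obtain ⟨j₀, -, hmaxb⟩ := Finset.exists_max_image Finset.univ b hnonempty
  have hmaxa' : ∀ i, a i ≤ a i₀ := fun i => hmaxa i (Finset.mem_univ _)
  have hmaxb' : ∀ j, b j ≤ b j₀ := fun j => hmaxb j (Finset.mem_univ _)
  choose ka hka using hA
  choose kb hkb using hB
  set s₀ : ℕ := ka i₀ with hs₀
  -- the ℕ-valued gap functions
  have hka_ge : ∀ i, s₀ ≤ ka i := by
    intro i
    have : (s₀ : ℝ) ≤ (ka i : ℝ) := by
      rw [← hka, ← hka]; linarith [hmaxa' i]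
    exact_mod_cast this
  set m : Fin n → ℕ := fun i => ka i - s₀ with hm
  have hm_cast : ∀ i, (m i : ℝ) = a i₀ - a i := by
    intro i
    have := hka i
    have h0' := hka i₀
    rw [hm]
    push_cast [Nat.cast_sub (hka_ge i)]
    linarith
  have hminj : Function.Injective m := by
    intro i j hij
    apply hainj
    have h1 := hm_cast i
    have h2 := hm_cast j
    rw [hij] at h1
    show a i = a j
    linarith
  have hkb_ge : ∀ j, kb j₀ ≤ kb j := by
    intro j
    have : ((kb j₀ : ℤ) : ℝ) ≤ ((kb j : ℤ) : ℝ) := by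
      rw [← hkb, ← hkb]; linarith [hmaxb' j]
    exact_mod_cast this
  set m' : Fin n → ℕ := fun j => (kb j - kb j₀).toNat with hm'
  have hm'toNat : ∀ j, ((m' j : ℤ)) = kb j - kb j₀ := by
    intro j
    have h3 := hkb_ge j
    exact Int.toNat_of_nonneg (by omega)
  have hm'_cast : ∀ j, (m' j : ℝ) = b j₀ - b j := by
    intro j
    have h1 := hkb j
    have h2 := hkb j₀
    have h5 := congrArg (fun t : ℤ => (t : ℝ)) (hm'toNat j)
    push_cast at h5
    rw [h5]
    linarith
  have hm'inj : Function.Injective m' := by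
    intro i j hij
    apply hbinj
    have h1 := hm'_cast i
    have h2 := hm'_cast j
    rw [hij] at h1
    show b i = b j
    linarith
  obtain ⟨hSa_ge, hSa_eq⟩ := nat_lemma m hminj
  obtain ⟨hSb_ge, hSb_eq⟩ := nat_lemma m' hm'inj
  set Sa : ℕ := ∑ i, m i with hSa
  set Sb : ℕ := ∑ j, m' j with hSb
  have hsuma : ∑ i, a i = n * a i₀ - (Sa : ℝ) := by
    have h1 : ∑ i, a i = ∑ i, (a i₀ - (m i : ℝ)) :=
      Finset.sum_congr rfl (fun i _ => by rw [hm_cast i]; ring)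
    rw [h1, Finset.sum_sub_distrib, Finset.sum_const, Finset.card_univ,
      Fintype.card_fin, nsmul_eq_mul, hSa, Nat.cast_sum]
  have hsumb : ∑ j, b j = n * b j₀ - (Sb : ℝ) := by
    have h1 : ∑ j, b j = ∑ j, (b j₀ - (m' j : ℝ)) :=
      Finset.sum_congr rfl (fun j _ => by rw [hm'_cast j]; ring)
    rw [h1, Finset.sum_sub_distrib, Finset.sum_const, Finset.card_univ,
      Fintype.card_fin, nsmul_eq_mul, hSb, Nat.cast_sum]
  have habmax : a i₀ + b j₀ ≤ (n : ℝ) - 1 := by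
    obtain ⟨k, hk⟩ := hAB i₀ j₀
    have hk0 : (0:ℝ) ≤ (k:ℕ) := Nat.cast_nonneg k
    rw [hc] at hk
    linarith
  have hreal : (Sa : ℝ) + (Sb : ℝ) = n * (a i₀ + b j₀) := by
    have := htot
    rw [hsuma, hsumb] at this
    linarith
  have hub_nat : Sa + Sb ≤ n * (n-1) := by
    have hnn : (0:ℝ) ≤ (n:ℝ) := Nat.cast_nonneg n
    have h1 : (Sa : ℝ) + (Sb : ℝ) ≤ (n:ℝ) * ((n:ℝ) - 1) := by nlinarith
    have h2 : ((Sa + Sb : ℕ) : ℝ) ≤ ((n * (n-1) : ℕ) : ℝ) := by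
      push_cast [hcastn]
      push_cast at h1
      linarith
    exact_mod_cast h2
  have heqnat : Sa + Sb = n * (n-1) := by omega
  have hma := hSa_eq (by omega)
  have hmb := hSb_eq (by omega)
  have hab_eq : a i₀ + b j₀ = (n : ℝ) - 1 := by
    have h1 : ((Sa + Sb : ℕ) : ℝ) = ((n * (n-1) : ℕ) : ℝ) := by exact_mod_cast heqnat
    push_cast [hcastn] at h1
    have hnpos : (0:ℝ) < (n:ℝ) := by exact_mod_cast h0
    have h2 : (n:ℝ) * (a i₀ + b j₀) = (n:ℝ) * ((n:ℝ) - 1) := by linarith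
    exact mul_left_cancel₀ (ne_of_gt hnpos) h2
  have hkbj0 : ((kb j₀ : ℤ) : ℝ) = -(s₀ : ℝ) := by
    have h1 := hkb j₀
    have h2 := hka i₀
    rw [hc] at h1 h2
    have h3 : (s₀ : ℝ) = ((ka i₀ : ℕ) : ℝ) := rfl
    linarith [hab_eq]
  refine ⟨s₀, Tuple.sort m, Tuple.sort m', ?_⟩
  funext z
  cases z with
  | inl i =>
    show lam (Sum.inl i)
      = (glRho n - (s₀:ℝ) • glXi n) (Sum.inl ((Tuple.sort m).symm i))
    have hRHS : (glRho n - (s₀:ℝ) • glXi n) (Sum.inl ((Tuple.sort m).symm i))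
        = ((n:ℝ) - 1 - 2 * (((Tuple.sort m).symm i : Fin n) : ℕ)) / 2 - s₀ := by
      simp [glRho, glXi]
    rw [hRHS]
    have h1 := hka i
    rw [hc] at h1
    have h2 : ka i = s₀ + m i := by
      have h3 := hka_ge i
      simp only [hm]
      omega
    have h4 : (((Tuple.sort m).symm i : Fin n) : ℕ) = m i := (hma i).symm
    rw [h4]
    have h5 : ((ka i : ℕ) : ℝ) = (s₀ : ℝ) + (m i : ℝ) := by exact_mod_cast congrArg (fun t : ℕ => (t:ℝ)) h2
    show a i = _
    rw [h5] at h1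
    linarith
  | inr j =>
    show lam (Sum.inr j)
      = (glRho n - (s₀:ℝ) • glXi n) (Sum.inr ((Tuple.sort m').symm j))
    have hRHS : (glRho n - (s₀:ℝ) • glXi n) (Sum.inr ((Tuple.sort m').symm j))
        = ((n:ℝ) - 1 - 2 * (((Tuple.sort m').symm j : Fin n) : ℕ)) / 2 + s₀ := by
      simp [glRho, glXi]
    rw [hRHS]
    have h1 := hkb j
    rw [hc] at h1
    have h4 : (((Tuple.sort m').symm j : Fin n) : ℕ) = m' j := (hmb j).symm
    rw [h4]
    have h5 : ((kb j : ℤ) : ℝ) = -(s₀:ℝ) + (m' j : ℝ) := by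
      have h6 := congrArg (fun t : ℤ => (t : ℝ)) (hm'toNat j)
      push_cast at h6
      rw [← hkbj0]
      linarith
    show b j = _
    rw [h5] at h1
    linarith
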